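/- arXiv:2506.21941 — 3 statements merged into one kernel-verified Lean document; each statement's English description precedes it below -/
import Mathlib

section
/- Let 0 < d_1 ≤ d_2 ≤ ⋯ ≤ d_n and 0 < d_1' ≤ d_2' ≤ ⋯ ≤ d_n' be integers, and suppose φ: ℝ^n → ℝ^n is a linear isomorphism mapping Z_{d_1} × ⋯ × Z_{d_n} onto Z_{d_1'} × ⋯ × Z_{d_n'}. Then for every index i there exists an index j such that φ(e_i) = e_j or φ(e_i) = −e_j, and d_i = d_j'. -/
/-- `Z_d = {-d, -d+2, …, d-2, d} = {k ∈ ℤ : |k| ≤ d, k ≡ d (mod 2)}`, as a subset of `ℝ`. -/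
def Zset (d : ℕ) : Set ℝ :=
  {x | ∃ k : ℤ, x = (k : ℝ) ∧ k.natAbs ≤ d ∧ k % 2 = (d : ℤ) % 2}

/-- The product `Z_{d 0} × ⋯ × Z_{d (n-1)}` as a subset of `ℝ^n`. -/
def Zprod {n : ℕ} (d : Fin n → ℕ) : Set (Fin n → ℝ) :=
  {x | ∀ i, x i ∈ Zset (d i)}

/-- Expansion of a linear map applied to a vector in terms of standard basis vectors. -/
lemma stmt8_expand {n : ℕ} (ψ : (Fin n → ℝ) →ₗ[ℝ] (Fin n → ℝ)) (x : Fin n → ℝ) (j : Fin n) :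
    ψ x j = ∑ i, x i * ψ (Pi.single i 1) j := by
  have hx : x = ∑ i, x i • (Pi.single i 1 : Fin n → ℝ) := by
    simp [← Pi.single_smul, Finset.univ_sum_single]
  conv_lhs => rw [hx]
  rw [map_sum]
  simp [Finset.sum_apply]

/-- A linear map sending `Zprod d` into `Zprod d'` sends the integer box
`∏ [-dᵢ, dᵢ]` into the integer box `∏ [-d'ᵢ, d'ᵢ]`. -/
lemma stmt8_box {n : ℕ} (d d' : Fin n → ℕ) (ψ : (Fin n → ℝ) →ₗ[ℝ] (Fin n → ℝ))
    (hmap : ∀ u ∈ Zprod d, ψ u ∈ Zprod d') (x : Fin n → ℝ)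
    (hx : ∀ i, ∃ k : ℤ, x i = k ∧ k.natAbs ≤ d i) (j : Fin n) :
    ∃ m : ℤ, ψ x j = m ∧ m.natAbs ≤ d' j := by
  choose k hk1 hk2 using hx
  set r : Fin n → ℤ := fun i => ((d i : ℤ) - k i) % 2 with hr
  set u : Fin n → ℝ := fun i => ((k i + r i : ℤ) : ℝ) with hu
  set v : Fin n → ℝ := fun i => ((r i - k i : ℤ) : ℝ) with hv
  have hum : u ∈ Zprod d := by
    intro i
    refine ⟨k i + r i, rfl, ?_, ?_⟩ <;> · have := hk2 i; simp only [hr]; omega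
  have hvm : v ∈ Zprod d := by
    intro i
    refine ⟨r i - k i, rfl, ?_, ?_⟩ <;> · have := hk2 i; simp only [hr]; omega
  have hxuv : x = (2⁻¹ : ℝ) • (u - v) := by
    funext i
    simp only [Pi.smul_apply, Pi.sub_apply, hu, hv, hk1 i]
    push_cast
    simp [smul_eq_mul]; ring
  obtain ⟨m₁, hm₁, hm₁a, hm₁p⟩ := hmap u hum j
  obtain ⟨m₂, hm₂, hm₂a, hm₂p⟩ := hmap v hvm j
  obtain ⟨q, hq, hqa⟩ : ∃ q : ℤ, m₁ - m₂ = 2 * q ∧ q.natAbs ≤ d' j := ⟨(m₁ - m₂)/2, by omega, by omega⟩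
  refine ⟨q, ?_, hqa⟩
  have : ψ x j = (2⁻¹ : ℝ) * (ψ u j - ψ v j) := by
    rw [hxuv, map_smul, map_sub]; simp
  rw [this, hm₁, hm₂]
  have h2 : (m₁ : ℝ) - m₂ = 2 * q := by exact_mod_cast congrArg (Int.cast : ℤ → ℝ) hq
  linarith

/-- The main integer-matrix lemma: if `A, C` are integer matrices with
column/row sum bounds and `C` is a one-sided inverse of `A`, then each column
of `A` has a distinguished entry of absolute value 1 whose row is otherwise zero,
and the corresponding `d, d'` values agree. -/
lemma stmt8_key_main {n : ℕ} (d d' : Fin n → ℕ) (hdpos : ∀ i, 0 < d i)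
    (A C : Fin n → Fin n → ℤ)
    (hA : ∀ j, ∑ i, |A i j| * d i ≤ d' j)
    (hC : ∀ i, ∑ j, |C j i| * d' j ≤ d i)
    (hAC : ∀ i, ∑ j, A i j * C j i = 1) (i : Fin n) :
    ∃ j, |A i j| = 1 ∧ (∀ i', i' ≠ i → A i' j = 0) ∧ (d i : ℤ) = d' j := by
  set S : ℤ := ∑ j, |C j i| * |A i j| with hS
  have hA' : ∀ j, |A i j| * d i ≤ d' j := fun j =>
    le_trans (Finset.single_le_sum (f := fun i' => |A i' j| * (d i' : ℤ))
      (fun i' _ => mul_nonneg (abs_nonneg _) (by positivity)) (Finset.mem_univ i)) (hA j)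
  have h1 : 1 ≤ S := by
    rw [← hAC i]
    apply Finset.sum_le_sum
    intro j _
    calc A i j * C j i ≤ |A i j * C j i| := le_abs_self _
    _ = |C j i| * |A i j| := by rw [abs_mul, mul_comm]
  have h2 : S * d i ≤ 1 * d i := by
    rw [one_mul, Finset.sum_mul]
    calc ∑ j, |C j i| * |A i j| * d i
        ≤ ∑ j, |C j i| * d' j := by
          apply Finset.sum_le_sum
          intro j _
          rw [mul_assoc]
          exact mul_le_mul_of_nonneg_left (hA' j) (abs_nonneg _)
      _ ≤ d i := hC i
  have hdz : (0 : ℤ) < d i := by exact_mod_cast hdpos i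
  have hS1 : S = 1 := le_antisymm (le_of_mul_le_mul_right h2 hdz) h1
  have hterm_nonneg : ∀ j : Fin n, 0 ≤ |C j i| * |A i j| :=
    fun j => mul_nonneg (abs_nonneg _) (abs_nonneg _)
  have hex : ∃ j, |C j i| * |A i j| ≠ 0 := by
    by_contra h
    push_neg at h
    have h0 : S = 0 := hS ▸ Finset.sum_eq_zero (fun j _ => h j)
    omega
  obtain ⟨j, hj⟩ := hex
  have hjle : |C j i| * |A i j| ≤ S :=
    Finset.single_le_sum (fun j' _ => hterm_nonneg j') (Finset.mem_univ j)
  have hj1 : |C j i| * |A i j| = 1 := le_antisymm (hS1 ▸ hjle) (by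
    have := hterm_nonneg j; omega)
  have hCA : |C j i| = 1 ∧ |A i j| = 1 := by
    rcases Int.mul_eq_one_iff_eq_one_or_neg_one.mp hj1 with ⟨h1', h2'⟩ | ⟨h1', h2'⟩
    · exact ⟨h1', h2'⟩
    · exact absurd h1' (by have := abs_nonneg (C j i); omega)
  have hdd : (d i : ℤ) = d' j := by
    have hle1 : (d i : ℤ) ≤ d' j := by have := hA' j; rw [hCA.2, one_mul] at this; exact this
    have hle2 : (d' j : ℤ) ≤ d i := by
      have := le_trans (Finset.single_le_sum (f := fun j' => |C j' i| * (d' j' : ℤ))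
        (fun j' _ => mul_nonneg (abs_nonneg _) (by positivity)) (Finset.mem_univ j)) (hC i)
      simpa [hCA.1] using this
    omega
  refine ⟨j, hCA.2, ?_, hdd⟩
  intro i' hi'
  have hsum := hA j
  have hsplit : ∑ i'', |A i'' j| * (d i'' : ℤ) =
      |A i j| * d i + ∑ i'' ∈ Finset.univ.erase i, |A i'' j| * (d i'' : ℤ) :=
    (Finset.add_sum_erase _ _ (Finset.mem_univ i)).symm
  have hrest : ∑ i'' ∈ Finset.univ.erase i, |A i'' j| * (d i'' : ℤ) ≤ 0 := by
    rw [hsplit] at hsum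
    rw [hCA.2, one_mul] at hsum
    omega
  have hzero : ∀ i'' ∈ Finset.univ.erase i, |A i'' j| * (d i'' : ℤ) = 0 := by
    rw [← Finset.sum_eq_zero_iff_of_nonneg (fun i'' _ => mul_nonneg (abs_nonneg _) (by positivity))]
    exact le_antisymm hrest (Finset.sum_nonneg (fun i'' _ => mul_nonneg (abs_nonneg _) (by positivity)))
  have := hzero i' (Finset.mem_erase.mpr ⟨hi', Finset.mem_univ _⟩)
  have hd'' : (0:ℤ) < d i' := by exact_mod_cast hdpos i'
  have : |A i' j| = 0 := by
    rcases mul_eq_zero.mp this with h | h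
    · exact h
    · omega
  exact abs_eq_zero.mp this

/-- Globalized form of the key lemma: each column of `A` is `±` a standard basis vector. -/
lemma stmt8_key {n : ℕ} (d d' : Fin n → ℕ) (hdpos : ∀ i, 0 < d i)
    (A C : Fin n → Fin n → ℤ)
    (hA : ∀ j, ∑ i, |A i j| * d i ≤ d' j)
    (hC : ∀ i, ∑ j, |C j i| * d' j ≤ d i)
    (hAC : ∀ i, ∑ j, A i j * C j i = 1) (i : Fin n) :
    ∃ j, |A i j| = 1 ∧ (∀ k, k ≠ j → A i k = 0) ∧ (d i : ℤ) = d' j := by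
  choose f hf1 hf2 hf3 using stmt8_key_main d d' hdpos A C hA hC hAC
  have hinj : Function.Injective f := by
    intro i₁ i₂ h
    by_contra hne
    have h0 : A i₁ (f i₂) = 0 := hf2 i₂ i₁ hne
    rw [← h] at h0
    have := hf1 i₁
    rw [h0] at this
    simp at this
  have hsurj : Function.Surjective f := Finite.injective_iff_surjective.mp hinj
  refine ⟨f i, hf1 i, ?_, hf3 i⟩
  intro k hk
  obtain ⟨i'', hi''⟩ := hsurj k
  have hne : i ≠ i'' := by
    rintro rfl
    exact hk hi''.symm
  rw [← hi'']
  exact hf2 i'' i hne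

/-- If a linear isomorphism of `ℝ^n` maps `Z_{d₁} × ⋯ × Z_{dₙ}` onto
`Z_{d₁'\''} × ⋯ × Z_{dₙ'\''}`, with all `dᵢ, dᵢ'\'' > 0` nondecreasing, then each standard basis
vector `eᵢ` is mapped to `± e_j` for some `j` with `dᵢ = d_j'\''`. -/
theorem stmt8 (n : ℕ) (d d' : Fin n → ℕ) (hd : Monotone d) (hd' : Monotone d')
    (hdpos : ∀ i, 0 < d i) (hd'pos : ∀ i, 0 < d' i)
    (φ : (Fin n → ℝ) ≃ₗ[ℝ] (Fin n → ℝ))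
    (hφ : φ '' Zprod d = Zprod d') :
    ∀ i, ∃ j, (φ (Pi.single i 1) = Pi.single j 1 ∨ φ (Pi.single i 1) = -Pi.single j 1) ∧
      d i = d' j := by
  have hfwd : ∀ u ∈ Zprod d, (φ.toLinearMap) u ∈ Zprod d' := by
    intro u hu
    rw [← hφ]
    exact Set.mem_image_of_mem _ hu
  have hbwd : ∀ y ∈ Zprod d', (φ.symm.toLinearMap) y ∈ Zprod d := by
    intro y hy
    rw [← hφ] at hy
    obtain ⟨x, hx, rfl⟩ := hy
    simpa using hx
  -- standard basis vectors lie in the integer boxes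
  have hsingle : ∀ (e : Fin n → ℕ), (∀ i, 0 < e i) → ∀ i : Fin n,
      ∀ i', ∃ k : ℤ, (Pi.single i 1 : Fin n → ℝ) i' = k ∧ k.natAbs ≤ e i' := by
    intro e he i i'
    refine ⟨if i' = i then 1 else 0, ?_, ?_⟩
    · rw [Pi.single_apply]
      split <;> simp
    · split
      · have := he i'; simp; omega
      · simp
  -- the integer matrices of φ and φ.symm
  choose A hA1 hA2 using fun i j =>
    stmt8_box d d' φ.toLinearMap hfwd (Pi.single i 1) (hsingle d hdpos i) j
  choose C hC1 hC2 using fun j i =>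
    stmt8_box d' d φ.symm.toLinearMap hbwd (Pi.single j 1) (hsingle d' hd'pos j) i
  -- column sum bounds for A
  have hAbound : ∀ j, ∑ i, |A i j| * (d i : ℤ) ≤ (d' j : ℤ) := by
    intro j
    set x : Fin n → ℝ := fun i => (((if 0 ≤ A i j then (d i : ℤ) else -(d i)) : ℤ) : ℝ) with hx
    have hxbox : ∀ i, ∃ k : ℤ, x i = k ∧ k.natAbs ≤ d i := by
      intro i
      refine ⟨if 0 ≤ A i j then (d i : ℤ) else -(d i), rfl, ?_⟩
      split <;> simp
    obtain ⟨m, hm, hma⟩ := stmt8_box d d' φ.toLinearMap hfwd x hxbox j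
    have hval : φ.toLinearMap x j = ((∑ i, |A i j| * (d i : ℤ) : ℤ) : ℝ) := by
      rw [stmt8_expand]
      push_cast
      apply Finset.sum_congr rfl
      intro i _
      have := hA1 i j
      simp only [LinearEquiv.coe_coe] at this ⊢
      rw [this]
      by_cases h : 0 ≤ A i j
      · have hR : (0:ℝ) ≤ ((A i j : ℤ) : ℝ) := by exact_mod_cast h
        simp only [abs_of_nonneg hR, hx]
        rw [if_pos h]
        push_cast
        ring
      · have hR : ((A i j : ℤ) : ℝ) < 0 := by exact_mod_cast lt_of_not_ge h
        simp only [abs_of_neg hR, hx]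
        rw [if_neg h]
        push_cast
        ring
    have hmeq : (∑ i, |A i j| * (d i : ℤ)) = m := by
      have := hval.symm.trans hm
      exact_mod_cast this
    have hmnn : 0 ≤ m := by
      rw [← hmeq]
      exact Finset.sum_nonneg fun i _ => mul_nonneg (abs_nonneg _) (by positivity)
    omega
  have hCbound : ∀ i, ∑ j, |C j i| * (d' j : ℤ) ≤ (d i : ℤ) := by
    intro i
    set x : Fin n → ℝ := fun j => (((if 0 ≤ C j i then (d' j : ℤ) else -(d' j)) : ℤ) : ℝ) with hx
    have hxbox : ∀ j, ∃ k : ℤ, x j = k ∧ k.natAbs ≤ d' j := by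
      intro j
      refine ⟨if 0 ≤ C j i then (d' j : ℤ) else -(d' j), rfl, ?_⟩
      split <;> simp
    obtain ⟨m, hm, hma⟩ := stmt8_box d' d φ.symm.toLinearMap hbwd x hxbox i
    have hval : φ.symm.toLinearMap x i = ((∑ j, |C j i| * (d' j : ℤ) : ℤ) : ℝ) := by
      rw [stmt8_expand]
      push_cast
      apply Finset.sum_congr rfl
      intro j _
      have := hC1 j i
      simp only [LinearEquiv.coe_coe] at this ⊢
      rw [this]
      by_cases h : 0 ≤ C j i
      · have hR : (0:ℝ) ≤ ((C j i : ℤ) : ℝ) := by exact_mod_cast h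
        simp only [abs_of_nonneg hR, hx]
        rw [if_pos h]
        push_cast
        ring
      · have hR : ((C j i : ℤ) : ℝ) < 0 := by exact_mod_cast lt_of_not_ge h
        simp only [abs_of_neg hR, hx]
        rw [if_neg h]
        push_cast
        ring
    have hmeq : (∑ j, |C j i| * (d' j : ℤ)) = m := by
      have := hval.symm.trans hm
      exact_mod_cast this
    have hmnn : 0 ≤ m := by
      rw [← hmeq]
      exact Finset.sum_nonneg fun j _ => mul_nonneg (abs_nonneg _) (by positivity)
    omega
  -- C is a one-sided inverse of A
  have hACinv : ∀ i, ∑ j, A i j * C j i = 1 := by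
    intro i
    have h0 : φ.symm (φ (Pi.single i 1)) i = (1 : ℝ) := by simp
    have hAfun : φ (Pi.single i 1) = fun j => ((A i j : ℤ) : ℝ) := by
      funext j
      exact hA1 i j
    have hexp : φ.symm.toLinearMap (φ (Pi.single i 1)) i =
        ∑ j, ((A i j : ℤ) : ℝ) * φ.symm.toLinearMap (Pi.single j 1) i := by
      rw [stmt8_expand]
      apply Finset.sum_congr rfl
      intro j _
      rw [hAfun]
    have : (1 : ℝ) = ∑ j, ((A i j : ℤ) : ℝ) * ((C j i : ℤ) : ℝ) := by
      rw [← h0]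
      have : φ.symm (φ (Pi.single i 1)) = φ.symm.toLinearMap (φ (Pi.single i 1)) := rfl
      rw [this, hexp]
      apply Finset.sum_congr rfl
      intro j _
      congr 1
      exact hC1 j i
    have : ((1 : ℤ) : ℝ) = ((∑ j, A i j * C j i : ℤ) : ℝ) := by
      push_cast
      exact this
    exact_mod_cast this.symm
  intro i
  obtain ⟨j, habs, hzero, hdd⟩ := stmt8_key d d' hdpos A C hAbound hCbound hACinv i
  refine ⟨j, ?_, by exact_mod_cast hdd⟩
  have hAcase : A i j = 1 ∨ A i j = -1 := (abs_eq (by norm_num)).mp habs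
  rcases hAcase with h | h
  · left
    funext k
    have := hA1 i k
    simp only [LinearEquiv.coe_coe] at this
    rw [this, Pi.single_apply]
    split
    · rename_i hk; subst hk; rw [h]; norm_num
    · rename_i hk
      rw [hzero k (by intro h'; exact hk h')]
      norm_num
  · right
    funext k
    have := hA1 i k
    simp only [LinearEquiv.coe_coe] at this
    rw [this]
    simp only [Pi.neg_apply, Pi.single_apply]
    split
    · rename_i hk; subst hk; rw [h]; norm_num
    · rename_i hk
      rw [hzero k (by intro h'; exact hk h')]
      norm_num
end

section
/- Let 0 < k_1 < k_2 < ⋯ < k_r and 0 < ℓ_1 < ℓ_2 < ⋯ < ℓ_s be integers, let n_1, …, n_r and m_1, …, m_s be positive integers with n = n_1 + ⋯ + n_r = m_1 + ⋯ + m_s, and suppose φ: ℝ^n → ℝ^n is a linear isomorphism mapping M_{k_1}^{n_1} × ⋯ × M_{k_r}^{n_r} onto M_{ℓ_1}^{m_1} × ⋯ × M_{ℓ_s}^{m_s}. Then k_r = ℓ_s, n_r = m_s, and φ maps the subset {0_{ℝ^{n−n_r}}} × M_{k_r}^{n_r} (vectors whose first n − n_r coordinates vanish and whose last n_r coordinates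 lie in M_{k_r}) onto {0_{ℝ^{n−m_s}}} × M_{ℓ_s}^{m_s}. -/
/-- `M_d = {x ∈ ℤ : -d ≤ x ≤ d}`, as a subset of `ℝ`. -/
def Mset (d : ℕ) : Set ℝ :=
  {x | ∃ k : ℤ, x = (k : ℝ) ∧ k.natAbs ≤ d}

/-- The product `M_{a 0} × ⋯ × M_{a (n-1)}` as a subset of `ℝ^n`.  A product of blocks
`M_{k_1}^{n_1} × ⋯ × M_{k_r}^{n_r}` with `0 < k_1 < ⋯ < k_r` corresponds to a monotone
positive coordinate-bound function `a : Fin n → ℕ`; then `k_r = a (n-1)` and the last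
block consists of the coordinates `i` with `a i = a (n-1)`. -/
def Mprod {n : ℕ} (a : Fin n → ℕ) : Set (Fin n → ℝ) :=
  {x | ∀ i, x i ∈ Mset (a i)}

namespace Stmt9Aux

lemma zero_mem_Mset (d : ℕ) : (0:ℝ) ∈ Mset d := ⟨0, by simp, by simp⟩

lemma natCast_mem_Mset {j d : ℕ} (h : j ≤ d) : ((j:ℝ)) ∈ Mset d :=
  ⟨j, by push_cast; ring, by simpa using h⟩

lemma smul_bound {x : ℝ} {d : ℕ} {m : ℤ} (hx : x = (m:ℝ)) (t : ℕ)
    (h : (t:ℝ) * x ∈ Mset d) : t * m.natAbs ≤ d := by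
  obtain ⟨k, hk, hkd⟩ := h
  have hmk : (t:ℤ) * m = k := by
    have h1 : (((t:ℤ) * m : ℤ) : ℝ) = (k:ℝ) := by push_cast; rw [← hx, ← hk]
    exact_mod_cast h1
  have h2 : ((t:ℤ) * m).natAbs = t * m.natAbs := by simp [Int.natAbs_mul]
  omega

/-- The set of points all of whose multiples up to `A` stay in `S`. -/
def Gset {n : ℕ} (S : Set (Fin n → ℝ)) (A : ℕ) : Set (Fin n → ℝ) :=
  {x | x ∈ S ∧ ∀ j : ℕ, j ≤ A → (j:ℝ) • x ∈ S}

/-- The subspace of vectors vanishing off `p`. -/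
def zeroOff {n : ℕ} (p : Fin n → Prop) [DecidablePred p] : Submodule ℝ (Fin n → ℝ) where
  carrier := {x | ∀ i, ¬ p i → x i = 0}
  add_mem' := by intro x y hx hy i hi; simp [hx i hi, hy i hi]
  zero_mem' := by intro i _; rfl
  smul_mem' := by intro r x hx i hi; simp [hx i hi]

lemma mem_zeroOff {n : ℕ} {p : Fin n → Prop} [DecidablePred p] {x : Fin n → ℝ} :
    x ∈ zeroOff p ↔ ∀ i, ¬ p i → x i = 0 := Iff.rfl

def extL {n : ℕ} (p : Fin n → Prop) [DecidablePred p] :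
    ({i : Fin n // p i} → ℝ) →ₗ[ℝ] (Fin n → ℝ) where
  toFun y := fun i => if h : p i then y ⟨i, h⟩ else 0
  map_add' := by intro y z; funext i; by_cases h : p i <;> simp [h]
  map_smul' := by intro r y; funext i; by_cases h : p i <;> simp [h]

lemma extL_inj {n : ℕ} (p : Fin n → Prop) [DecidablePred p] :
    Function.Injective (extL p) := by
  intro y z h
  funext j
  have := congrFun h j.1
  simpa [extL, j.2] using this

lemma range_extL {n : ℕ} (p : Fin n → Prop) [DecidablePred p] :
    LinearMap.range (extL p) = zeroOff p := by
  ext x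
  constructor
  · rintro ⟨y, rfl⟩ i hi
    simp [extL, hi]
  · intro hx
    refine ⟨fun j => x j.1, ?_⟩
    funext i
    by_cases h : p i
    · simp [extL, h]
    · simp [extL, h, hx i h]

lemma finrank_zeroOff {n : ℕ} (p : Fin n → Prop) [DecidablePred p] :
    Module.finrank ℝ (zeroOff p) = (Finset.univ.filter p).card := by
  rw [← range_extL p, LinearMap.finrank_range_of_inj (extL_inj p)]
  simp [Fintype.card_subtype]

end Stmt9Aux

open Stmt9Aux in
/-- If a linear isomorphism of `ℝ^n` maps `M_{k_1}^{n_1} × ⋯ × M_{k_r}^{n_r}` onto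
`M_{ℓ_1}^{m_1} × ⋯ × M_{ℓ_s}^{m_s}` (both encoded by monotone positive coordinate-bound
functions `a`, `b`), then `k_r = ℓ_s`, `n_r = m_s`, and `φ` maps
`{0} × M_{k_r}^{n_r}` onto `{0} × M_{ℓ_s}^{m_s}`. -/
theorem stmt9 (n : ℕ) (hn : 0 < n) (a b : Fin n → ℕ)
    (ha : Monotone a) (hb : Monotone b) (hapos : ∀ i, 0 < a i) (hbpos : ∀ i, 0 < b i)
    (φ : (Fin n → ℝ) ≃ₗ[ℝ] (Fin n → ℝ))
    (hφ : φ '' Mprod a = Mprod b) :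
    a ⟨n - 1, by omega⟩ = b ⟨n - 1, by omega⟩ ∧
    (Finset.univ.filter fun i => a i = a ⟨n - 1, by omega⟩).card =
      (Finset.univ.filter fun i => b i = b ⟨n - 1, by omega⟩).card ∧
    φ '' {x | ∀ i, if a i = a ⟨n - 1, by omega⟩ then x i ∈ Mset (a i) else x i = 0} =
      {x | ∀ i, if b i = b ⟨n - 1, by omega⟩ then x i ∈ Mset (b i) else x i = 0} := by
  classical
  have hNlt : n - 1 < n := by omega
  set N : Fin n := ⟨n - 1, hNlt⟩ with hNdef
  have hNle : ∀ i : Fin n, i ≤ N := by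
    intro i
    have := i.isLt
    rw [Fin.le_def]
    simp only [hNdef]
    omega
  have hmaxa : ∀ i, a i ≤ a N := fun i => ha (hNle i)
  have hmaxb : ∀ i, b i ≤ b N := fun i => hb (hNle i)
  -- membership transfer
  have hmem : ∀ y, y ∈ Mprod a ↔ φ y ∈ Mprod b := by
    intro y
    rw [← hφ]
    constructor
    · exact fun h => ⟨y, h, rfl⟩
    · rintro ⟨z, hz, hzy⟩
      rwa [φ.injective hzy] at hz
  have hmem' : ∀ y, y ∈ Mprod b ↔ φ.symm y ∈ Mprod a := by
    intro y
    rw [hmem (φ.symm y), φ.apply_symm_apply]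
  -- scaled singles stay in the box
  have hsingle : ∀ (c : Fin n → ℕ) (i : Fin n) (j : ℕ), j ≤ c i →
      (j:ℝ) • (Pi.single i (1:ℝ) : Fin n → ℝ) ∈ Mprod c := by
    intro c i j hj i'
    by_cases h : i' = i
    · subst h
      simpa using natCast_mem_Mset hj
    · have : ((j:ℝ) • (Pi.single i (1:ℝ) : Fin n → ℝ)) i' = 0 := by simp [Pi.single_apply, h]
      rw [this]
      exact zero_mem_Mset _
  -- chain bound : if x ≠ 0 is in the box and t•x is too, then t ≤ max
  have hchain : ∀ (c : Fin n → ℕ), (∀ i, c i ≤ c N) → ∀ (x : Fin n → ℝ),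
      x ≠ 0 → x ∈ Mprod c → ∀ t : ℕ, (t:ℝ) • x ∈ Mprod c → t ≤ c N := by
    intro c hm x hx hxS t ht
    obtain ⟨i, hi⟩ := Function.ne_iff.mp hx
    obtain ⟨m, hmx, _⟩ := hxS i
    have hm0 : m ≠ 0 := by rintro rfl; exact hi (by simpa using hmx)
    have hbd := smul_bound hmx t (by simpa using ht i)
    have h1 : 1 ≤ m.natAbs := Int.natAbs_pos.mpr hm0
    calc t = t * 1 := (mul_one t).symm
      _ ≤ t * m.natAbs := Nat.mul_le_mul_left t h1
      _ ≤ c i := hbd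
      _ ≤ c N := hm i
  have hs0 : (Pi.single N (1:ℝ) : Fin n → ℝ) ≠ 0 := by
    intro h
    have := congrFun h N
    simp at this
  -- Part 1 : a N = b N
  have hgoal1 : a N = b N := by
    have h1 : a N ≤ b N := by
      have hφs0 : φ (Pi.single N 1) ≠ 0 := fun h =>
        hs0 (φ.injective (h.trans (map_zero φ).symm))
      refine hchain b hmaxb _ hφs0 ?_ _ ?_
      · exact (hmem _).mp (by simpa using hsingle a N 1 (hapos N))
      · rw [← map_smul]
        exact (hmem _).mp (hsingle a N (a N) le_rfl)
    have h2 : b N ≤ a N := by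
      have hφs0 : φ.symm (Pi.single N 1) ≠ 0 := fun h =>
        hs0 (φ.symm.injective (h.trans (map_zero φ.symm).symm))
      refine hchain a hmaxa _ hφs0 ?_ _ ?_
      · exact (hmem' _).mp (by simpa using hsingle b N 1 (hbpos N))
      · rw [← map_smul]
        exact (hmem' _).mp (hsingle b N (b N) le_rfl)
    omega
  -- Image of the G set
  have himg : φ '' Gset (Mprod a) (a N) = Gset (Mprod b) (a N) := by
    ext y
    constructor
    · rintro ⟨x, ⟨hxS, hxc⟩, rfl⟩
      exact ⟨(hmem x).mp hxS, fun j hj => by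
        rw [← map_smul]; exact (hmem _).mp (hxc j hj)⟩
    · rintro ⟨hyS, hyc⟩
      refine ⟨φ.symm y, ⟨(hmem' y).mp hyS, fun j hj => ?_⟩, φ.apply_symm_apply y⟩
      rw [← map_smul]
      exact (hmem' _).mp (hyc j hj)
  -- Span of the G set is the last-block subspace
  have hspan : ∀ (c : Fin n → ℕ), (∀ i, 0 < c i) → (∀ i, c i ≤ c N) →
      Submodule.span ℝ (Gset (Mprod c) (c N)) = zeroOff (fun i => c i = c N) := by
    intro c hpos hm
    apply le_antisymm
    · rw [Submodule.span_le]
      rintro x ⟨hxS, hxc⟩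
      intro i hi
      obtain ⟨m, hmx, _⟩ := hxS i
      have hbd := smul_bound hmx (c N) (by simpa using hxc (c N) le_rfl i)
      have hm0 : m.natAbs = 0 := by
        by_contra h
        have h1 : 1 ≤ m.natAbs := Nat.one_le_iff_ne_zero.mpr h
        have h2 : c N ≤ c N * m.natAbs := Nat.le_mul_of_pos_right _ (by omega)
        have h3 := hm i
        omega
      rw [hmx, Int.natAbs_eq_zero.mp hm0]
      simp
    · intro x hx
      have hxe : x = ∑ i : Fin n, x i • (Pi.single i (1:ℝ) : Fin n → ℝ) := by
        funext j
        rw [Finset.sum_apply]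
        simp [Pi.single_apply]
      rw [hxe]
      apply Submodule.sum_mem
      intro i _
      by_cases h : c i = c N
      · refine Submodule.smul_mem _ _ (Submodule.subset_span ?_)
        refine ⟨by simpa using hsingle c i 1 (hpos i), fun j hj => ?_⟩
        exact hsingle c i j (by omega)
      · have : x i = 0 := hx i h
        simp [this]
  -- mapped subspace
  have hVmap : Submodule.map (φ : (Fin n → ℝ) →ₗ[ℝ] (Fin n → ℝ))
      (zeroOff (fun i => a i = a N)) = zeroOff (fun i => b i = b N) := by
    rw [← hspan a hapos hmaxa, ← hspan b hbpos hmaxb, Submodule.map_span]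
    simp only [LinearEquiv.coe_coe]
    rw [himg, hgoal1]
  -- Part 2
  have hgoal2 : (Finset.univ.filter fun i => a i = a N).card =
      (Finset.univ.filter fun i => b i = b N).card := by
    rw [← finrank_zeroOff, ← finrank_zeroOff, ← hVmap,
      LinearEquiv.finrank_map_eq]
  -- Part 3
  have hTa : {x : Fin n → ℝ | ∀ i, if a i = a N then x i ∈ Mset (a i) else x i = 0}
      = ↑(zeroOff fun i => a i = a N) ∩ Mprod a := by
    ext x
    constructor
    · intro h
      refine ⟨fun i hi => by simpa [if_neg hi] using h i, fun i => ?_⟩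
      by_cases hc : a i = a N
      · simpa [if_pos hc] using h i
      · rw [show x i = 0 by simpa [if_neg hc] using h i]
        exact zero_mem_Mset _
    · rintro ⟨h0, hS⟩ i
      by_cases hc : a i = a N
      · simpa [if_pos hc] using hS i
      · simpa [if_neg hc] using h0 i hc
  have hTb : {x : Fin n → ℝ | ∀ i, if b i = b N then x i ∈ Mset (b i) else x i = 0}
      = ↑(zeroOff fun i => b i = b N) ∩ Mprod b := by
    ext x
    constructor
    · intro h
      refine ⟨fun i hi => by simpa [if_neg hi] using h i, fun i => ?_⟩
      by_cases hc : b i = b N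
      · simpa [if_pos hc] using h i
      · rw [show x i = 0 by simpa [if_neg hc] using h i]
        exact zero_mem_Mset _
    · rintro ⟨h0, hS⟩ i
      by_cases hc : b i = b N
      · simpa [if_pos hc] using hS i
      · simpa [if_neg hc] using h0 i hc
  have hgoal3 : φ '' {x : Fin n → ℝ | ∀ i, if a i = a N then x i ∈ Mset (a i) else x i = 0}
      = {x : Fin n → ℝ | ∀ i, if b i = b N then x i ∈ Mset (b i) else x i = 0} := by
    rw [hTa, hTb, Set.image_inter φ.injective, hφ]
    congr 1
    calc φ '' ↑(zeroOff fun i => a i = a N)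
        = ↑(Submodule.map (φ : (Fin n → ℝ) →ₗ[ℝ] (Fin n → ℝ))
            (zeroOff fun i => a i = a N)) := rfl
      _ = ↑(zeroOff fun i => b i = b N) := by rw [hVmap]
  exact ⟨hgoal1, hgoal2, hgoal3⟩
end

section
/- Let t ≥ 1 and let m_1, m_2, …, m_t be integers with m_i > 1 for all i, and let n ≥ 1. If there exists an injective group homomorphism from the direct product S_{m_1} × S_{m_2} × ⋯ × S_{m_t} of symmetric groups into the symmetric group S_n, then m_1 + m_2 + ⋯ + m_t ≤ n. -/
variable {α β : Type*}

abbrev Gp (α β : Type*) := Multiplicative ((α → ZMod 2) × (β → ZMod 3))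

lemma pi2_smul3 (v : α → ZMod 2) : (3 : ℕ) • v = v := by
  funext i
  show (3 : ℕ) • (v i) = v i
  rw [nsmul_eq_mul, show ((3:ℕ) : ZMod 2) = 1 by decide, one_mul]

lemma pi2_smul4 (v : α → ZMod 2) : (4 : ℕ) • v = 0 := by
  funext i
  show (4 : ℕ) • (v i) = 0
  rw [nsmul_eq_mul, show ((4:ℕ) : ZMod 2) = 0 by decide, zero_mul]

lemma pi3_smul3 (w : β → ZMod 3) : (3 : ℕ) • w = 0 := by
  funext i
  show (3 : ℕ) • (w i) = 0
  rw [nsmul_eq_mul, show ((3:ℕ) : ZMod 3) = 0 by decide, zero_mul]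

lemma pi3_smul4 (w : β → ZMod 3) : (4 : ℕ) • w = w := by
  funext i
  show (4 : ℕ) • (w i) = w i
  rw [nsmul_eq_mul, show ((4:ℕ) : ZMod 3) = 1 by decide, one_mul]

/-- The 2-part of a subgroup of `Gp α β`, as an `𝔽₂`-submodule. -/
def sub2 (K : Subgroup (Gp α β)) : Submodule (ZMod 2) (α → ZMod 2) where
  carrier := {v | Multiplicative.ofAdd (v, (0 : β → ZMod 3)) ∈ K}
  zero_mem' := by simpa [Prod.mk_zero_zero] using K.one_mem
  add_mem' := by
    intro v v' hv hv'
    have := K.mul_mem hv hv'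
    simpa [← ofAdd_add, Prod.mk_add_mk] using this
  smul_mem' := by
    intro c v hv
    have hc : c = 0 ∨ c = 1 := by revert c; decide
    rcases hc with rfl | rfl
    · simpa [Prod.mk_zero_zero] using K.one_mem
    · simpa using hv

/-- The 3-part of a subgroup of `Gp α β`, as an `𝔽₃`-submodule. -/
def sub3 (K : Subgroup (Gp α β)) : Submodule (ZMod 3) (β → ZMod 3) where
  carrier := {w | Multiplicative.ofAdd ((0 : α → ZMod 2), w) ∈ K}
  zero_mem' := by simpa [Prod.mk_zero_zero] using K.one_mem
  add_mem' := by
    intro w w' hw hw'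
    have := K.mul_mem hw hw'
    simpa [← ofAdd_add, Prod.mk_add_mk] using this
  smul_mem' := by
    intro c w hw
    have hc : c = 0 ∨ c = 1 ∨ c = 2 := by revert c; decide
    rcases hc with rfl | rfl | rfl
    · simpa [Prod.mk_zero_zero] using K.one_mem
    · simpa using hw
    · have := K.mul_mem hw hw
      have h2 : (2 : ZMod 3) • w = w + w := by
        funext i; simp [Pi.smul_apply, smul_eq_mul, two_mul]
      simpa [h2, ← ofAdd_add, Prod.mk_add_mk] using this

lemma mem_sub2 {K : Subgroup (Gp α β)} {k : Gp α β} (hk : k ∈ K) :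
    k.toAdd.1 ∈ sub2 K := by
  have h3 : k ^ 3 ∈ K := K.pow_mem hk 3
  have hkey : k ^ 3 = Multiplicative.ofAdd (k.toAdd.1, (0 : β → ZMod 3)) := by
    apply Multiplicative.toAdd.injective
    rw [toAdd_pow, toAdd_ofAdd]
    refine Prod.ext ?_ ?_
    · rw [Prod.smul_fst]; exact pi2_smul3 _
    · rw [Prod.smul_snd]; exact pi3_smul3 _
  rw [hkey] at h3
  exact h3

lemma mem_sub3 {K : Subgroup (Gp α β)} {k : Gp α β} (hk : k ∈ K) :
    k.toAdd.2 ∈ sub3 K := by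
  have h4 : k ^ 4 ∈ K := K.pow_mem hk 4
  have hkey : k ^ 4 = Multiplicative.ofAdd ((0 : α → ZMod 2), k.toAdd.2) := by
    apply Multiplicative.toAdd.injective
    rw [toAdd_pow, toAdd_ofAdd]
    refine Prod.ext ?_ ?_
    · rw [Prod.smul_fst]; exact pi2_smul4 _
    · rw [Prod.smul_snd]; exact pi3_smul4 _
  rw [hkey] at h4
  exact h4

lemma card_subgroup_eq (K : Subgroup (Gp α β)) :
    Nat.card K = Nat.card (sub2 K) * Nat.card (sub3 K) := by
  rw [← Nat.card_prod]
  apply Nat.card_congr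
  refine
    { toFun := fun k => (⟨k.1.toAdd.1, mem_sub2 k.2⟩, ⟨k.1.toAdd.2, mem_sub3 k.2⟩)
      invFun := fun p => ⟨Multiplicative.ofAdd (p.1.1, p.2.1), ?_⟩
      left_inv := ?_
      right_inv := ?_ }
  · have := K.mul_mem p.1.2 p.2.2
    simpa [← ofAdd_add, Prod.mk_add_mk] using this
  · intro k
    apply Subtype.ext
    simp
  · intro p
    refine Prod.ext (Subtype.ext ?_) (Subtype.ext ?_) <;> simp

lemma card_submodule_pow {p : ℕ} [Fact p.Prime] {M : Type*} [AddCommGroup M] [Module (ZMod p) M]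
    [Finite M] (U : Submodule (ZMod p) M) :
    Nat.card U = p ^ Module.finrank (ZMod p) U := by
  letI : Fintype U := Fintype.ofFinite _
  rw [Nat.card_eq_fintype_card, Module.card_eq_pow_finrank (K := ZMod p), ZMod.card]

lemma stabilizer_eq_of_mem_orbit {G X : Type*} [CommGroup G] [MulAction G X] {p q : X}
    (h : p ∈ MulAction.orbit G q) :
    MulAction.stabilizer G p = MulAction.stabilizer G q := by
  obtain ⟨g, rfl⟩ := h
  rw [MulAction.stabilizer_smul_eq_stabilizer_map_conj]
  have hconj : ∀ y : G, g * y * g⁻¹ = y := fun y => by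
    rw [mul_comm g y, mul_assoc, mul_inv_cancel, mul_one]
  ext x
  simp only [Subgroup.mem_map, MulEquiv.coe_toMonoidHom, MulAut.conj_apply, hconj]
  constructor
  · rintro ⟨y, hy, rfl⟩; exact hy
  · intro hx; exact ⟨x, hx, rfl⟩

-- numeric lemma (proved earlier in a.lean, restated here)
lemma h2pow (x : ℕ) : 2 * x ≤ 2 ^ x := by
  induction x with
  | zero => simp
  | succ k ih =>
    rcases Nat.eq_zero_or_pos k with rfl | hk
    · simp
    · have : 2 ≤ 2 ^ k := by
        calc 2 = 2 * 1 := by ring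
        _ ≤ 2 * k := by omega
        _ ≤ 2 ^ k := ih
      rw [pow_succ]; omega

lemma h3pow (y : ℕ) : 3 * y ≤ 3 ^ y := by
  induction y with
  | zero => simp
  | succ k ih =>
    rcases Nat.eq_zero_or_pos k with rfl | hk
    · simp
    · have : 3 ≤ 3 ^ k := by
        calc 3 = 3 * 1 := by ring
        _ ≤ 3 * k := by omega
        _ ≤ 3 ^ k := ih
      rw [pow_succ]; omega

lemma aux23 (x y : ℕ) : 2 * x + 3 * y ≤ 2 ^ x * 3 ^ y := by
  rcases Nat.eq_zero_or_pos x with rfl | hx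
  · simpa using h3pow y
  rcases Nat.eq_zero_or_pos y with rfl | hy
  · simpa using h2pow x
  have hx2 : 2 ≤ 2 ^ x := by
    calc 2 = 2*1 := by ring
    _ ≤ 2*x := by omega
    _ ≤ 2^x := h2pow x
  have hy2 : 3 ≤ 3 ^ y := by
    calc 3 = 3*1 := by ring
    _ ≤ 3*y := by omega
    _ ≤ 3^y := h3pow y
  calc 2*x + 3*y ≤ 2^x + 3^y := by have := h2pow x; have := h3pow y; omega
    _ ≤ 2^x * 3^y := by nlinarith

lemma core (α β : Type*) [Fintype α] [Fintype β] (n : ℕ)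
    (φ : Gp α β →* Equiv.Perm (Fin n)) (hφ : Function.Injective φ) :
    2 * Fintype.card α + 3 * Fintype.card β ≤ n := by
  classical
  letI : MulAction (Gp α β) (Fin n) := MulAction.compHom _ φ
  letI : Fintype (Quotient (MulAction.orbitRel (Gp α β) (Fin n))) := Fintype.ofFinite _
  letI : ∀ b : Fin n, Fintype (MulAction.stabilizer (Gp α β) b) := fun b => Fintype.ofFinite _
  set Ω := Quotient (MulAction.orbitRel (Gp α β) (Fin n)) with hΩdef
  let K : Ω → Subgroup (Gp α β) := fun ω => MulAction.stabilizer (Gp α β) ω.out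
  let q2 : Ω → ℕ := fun ω => Module.finrank (ZMod 2) ((α → ZMod 2) ⧸ sub2 (K ω))
  let q3 : Ω → ℕ := fun ω => Module.finrank (ZMod 3) ((β → ZMod 3) ⧸ sub3 (K ω))
  -- stabilizers along an orbit agree
  have hstab : ∀ p : Fin n, K (Quotient.mk (MulAction.orbitRel (Gp α β) (Fin n)) p)
      = MulAction.stabilizer (Gp α β) p := by
    intro p
    have h := Quotient.mk_out (s := MulAction.orbitRel (Gp α β) (Fin n)) p
    exact stabilizer_eq_of_mem_orbit (MulAction.orbitRel_apply.mp h)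
  -- elements in all stabilizers are trivial
  have hfix : ∀ g : Gp α β, (∀ ω : Ω, g ∈ K ω) → g = 1 := by
    intro g hg
    apply hφ
    rw [map_one]
    ext p
    have hgp : g ∈ MulAction.stabilizer (Gp α β) p := by
      rw [← hstab p]; exact hg _
    have h2 : φ g p = p := hgp
    simp [h2]
  -- linear algebra: sum of quotient ranks dominates the rank
  have hs2 : Fintype.card α ≤ ∑ ω : Ω, q2 ω := by
    have hinj : Function.Injective
        (LinearMap.pi fun ω : Ω => (sub2 (K ω)).mkQ :
          (α → ZMod 2) →ₗ[ZMod 2] ∀ ω : Ω, (α → ZMod 2) ⧸ sub2 (K ω)) := by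
      refine LinearMap.ker_eq_bot.mp ?_
      rw [eq_bot_iff]
      intro v hv
      simp only [LinearMap.mem_ker, LinearMap.pi_apply, funext_iff, Pi.zero_apply,
        Submodule.mkQ_apply, Submodule.Quotient.mk_eq_zero] at hv
      have hone : Multiplicative.ofAdd (v, (0 : β → ZMod 3)) = 1 :=
        hfix _ (fun ω => hv ω)
      have : (v, (0 : β → ZMod 3)) = ((0 : α → ZMod 2), (0 : β → ZMod 3)) := by
        simpa using congrArg Multiplicative.toAdd hone
      simpa using congrArg Prod.fst this
    calc Fintype.card α = Module.finrank (ZMod 2) (α → ZMod 2) :=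
          (Module.finrank_pi (ZMod 2)).symm
      _ ≤ Module.finrank (ZMod 2) (∀ ω : Ω, (α → ZMod 2) ⧸ sub2 (K ω)) :=
          LinearMap.finrank_le_finrank_of_injective hinj
      _ = ∑ ω : Ω, q2 ω := Module.finrank_pi_fintype (ZMod 2)
  have hs3 : Fintype.card β ≤ ∑ ω : Ω, q3 ω := by
    have hinj : Function.Injective
        (LinearMap.pi fun ω : Ω => (sub3 (K ω)).mkQ :
          (β → ZMod 3) →ₗ[ZMod 3] ∀ ω : Ω, (β → ZMod 3) ⧸ sub3 (K ω)) := by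
      refine LinearMap.ker_eq_bot.mp ?_
      rw [eq_bot_iff]
      intro w hw
      simp only [LinearMap.mem_ker, LinearMap.pi_apply, funext_iff, Pi.zero_apply,
        Submodule.mkQ_apply, Submodule.Quotient.mk_eq_zero] at hw
      have hone : Multiplicative.ofAdd ((0 : α → ZMod 2), w) = 1 :=
        hfix _ (fun ω => hw ω)
      have : ((0 : α → ZMod 2), w) = ((0 : α → ZMod 2), (0 : β → ZMod 3)) := by
        simpa using congrArg Multiplicative.toAdd hone
      simpa using congrArg Prod.snd this
    calc Fintype.card β = Module.finrank (ZMod 3) (β → ZMod 3) :=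
          (Module.finrank_pi (ZMod 3)).symm
      _ ≤ Module.finrank (ZMod 3) (∀ ω : Ω, (β → ZMod 3) ⧸ sub3 (K ω)) :=
          LinearMap.finrank_le_finrank_of_injective hinj
      _ = ∑ ω : Ω, q3 ω := Module.finrank_pi_fintype (ZMod 3)
  -- counting
  have hcardG : Fintype.card (Gp α β) = 2 ^ Fintype.card α * 3 ^ Fintype.card β := by
    rw [← Nat.card_eq_fintype_card, Nat.card_congr Multiplicative.toAdd, Nat.card_prod,
      Nat.card_eq_fintype_card, Nat.card_eq_fintype_card, Fintype.card_fun, Fintype.card_fun,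
      ZMod.card, ZMod.card]
  have hd2 : ∀ ω : Ω, Module.finrank (ZMod 2) (sub2 (K ω)) + q2 ω = Fintype.card α := by
    intro ω
    rw [add_comm]
    rw [Submodule.finrank_quotient_add_finrank (sub2 (K ω)), Module.finrank_pi]
  have hd3 : ∀ ω : Ω, Module.finrank (ZMod 3) (sub3 (K ω)) + q3 ω = Fintype.card β := by
    intro ω
    rw [add_comm]
    rw [Submodule.finrank_quotient_add_finrank (sub3 (K ω)), Module.finrank_pi]
  have hdiv : ∀ ω : Ω, Fintype.card (Gp α β) / Fintype.card (K ω)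
      = 2 ^ q2 ω * 3 ^ q3 ω := by
    intro ω
    have hK : Fintype.card (K ω)
        = 2 ^ Module.finrank (ZMod 2) (sub2 (K ω)) * 3 ^ Module.finrank (ZMod 3) (sub3 (K ω)) := by
      rw [← Nat.card_eq_fintype_card, card_subgroup_eq, card_submodule_pow, card_submodule_pow]
    have hGsplit : Fintype.card (Gp α β)
        = Fintype.card (K ω) * (2 ^ q2 ω * 3 ^ q3 ω) := by
      rw [hcardG, hK, ← hd2 ω, ← hd3 ω, pow_add, pow_add]; ring
    rw [hGsplit, Nat.mul_div_cancel_left _ (by positivity)]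
  have hn := MulAction.card_eq_sum_card_group_div_card_stabilizer (Gp α β) (Fin n)
  calc 2 * Fintype.card α + 3 * Fintype.card β
      ≤ 2 * ∑ ω : Ω, q2 ω + 3 * ∑ ω : Ω, q3 ω := by
        have := Nat.mul_le_mul_left 2 hs2
        have := Nat.mul_le_mul_left 3 hs3
        omega
    _ = ∑ ω : Ω, (2 * q2 ω + 3 * q3 ω) := by
        rw [Finset.sum_add_distrib, Finset.mul_sum, Finset.mul_sum]
    _ ≤ ∑ ω : Ω, 2 ^ q2 ω * 3 ^ q3 ω := Finset.sum_le_sum fun ω _ => aux23 _ _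
    _ = ∑ ω : Ω, Fintype.card (Gp α β) / Fintype.card (K ω) := by
        exact Finset.sum_congr rfl fun ω _ => (hdiv ω).symm
    _ = n := by rw [← hn, Fintype.card_fin]

/-- Conjugation of permutation groups by an equivalence, as a monoid hom. -/
def permCongrHom {α β : Type*} (e : α ≃ β) : Equiv.Perm α →* Equiv.Perm β where
  toFun σ := (e.symm.trans σ).trans e
  map_one' := by ext x; simp
  map_mul' σ τ := by ext x; simp [Equiv.Perm.mul_apply]

lemma permCongrHom_injective {α β : Type*} (e : α ≃ β) :
    Function.Injective (permCongrHom e) := by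
  intro σ τ h
  ext x
  have := congrArg (fun (p : Equiv.Perm β) => e.symm (p (e x))) h
  simpa [permCongrHom] using this

/-- The shear permutation family. -/
def shearHom (a b : ℕ) :
    Multiplicative ((Fin a → ZMod 2) × (Fin b → ZMod 3)) →*
      Equiv.Perm ((Fin a × ZMod 2) ⊕ (Fin b × ZMod 3)) where
  toFun g := Equiv.sumCongr
      (Equiv.prodShear (Equiv.refl _) fun i => Equiv.addRight (g.toAdd.1 i))
      (Equiv.prodShear (Equiv.refl _) fun j => Equiv.addRight (g.toAdd.2 j))
  map_one' := by
    ext x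
    rcases x with ⟨i, x⟩ | ⟨j, y⟩ <;> simp [Equiv.prodShear]
  map_mul' g h := by
    ext x
    rcases x with ⟨i, x⟩ | ⟨j, y⟩ <;>
      simp [Equiv.prodShear, Equiv.Perm.mul_apply, add_assoc, add_comm, add_left_comm]

lemma shearHom_injective (a b : ℕ) : Function.Injective (shearHom a b) := by
  rw [injective_iff_map_eq_one]
  intro g hg
  have h1 : ∀ i : Fin a, g.toAdd.1 i = 0 := by
    intro i
    have := congrArg (fun σ : Equiv.Perm _ => σ (Sum.inl (i, (0 : ZMod 2)))) hg
    simpa [shearHom, Equiv.prodShear] using this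
  have h2 : ∀ j : Fin b, g.toAdd.2 j = 0 := by
    intro j
    have := congrArg (fun σ : Equiv.Perm _ => σ (Sum.inr (j, (0 : ZMod 3)))) hg
    simpa [shearHom, Equiv.prodShear] using this
  have : g.toAdd = 0 := by
    ext1
    · funext i; exact h1 i
    · funext j; exact h2 j
  simpa [← toAdd_one] using congrArg Multiplicative.ofAdd this

/-- Embedding of `C₂^a × C₃^b` into `Perm (Fin m)` when `2a + 3b = m`. -/
noncomputable def psiHom (a b m : ℕ) (h : 2 * a + 3 * b = m) :
    Multiplicative ((Fin a → ZMod 2) × (Fin b → ZMod 3)) →* Equiv.Perm (Fin m) :=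
  (permCongrHom (Fintype.equivFinOfCardEq
    (by simp [ZMod.card]; omega))).comp (shearHom a b)

lemma psiHom_injective (a b m : ℕ) (h : 2 * a + 3 * b = m) :
    Function.Injective (psiHom a b m h) :=
  (permCongrHom_injective _).comp (shearHom_injective a b)

/-- The combined embedding into a product of permutation groups. -/
noncomputable def bigPhi {t : ℕ} (m a b : Fin t → ℕ) (h : ∀ i, 2 * a i + 3 * b i = m i) :
    Gp (Σ i, Fin (a i)) (Σ i, Fin (b i)) →* ∀ i, Equiv.Perm (Fin (m i)) where
  toFun g i := psiHom (a i) (b i) (m i) (h i)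
    (Multiplicative.ofAdd (fun s => g.toAdd.1 ⟨i, s⟩, fun s => g.toAdd.2 ⟨i, s⟩))
  map_one' := by
    funext i
    show psiHom (a i) (b i) (m i) (h i) 1 = 1
    exact map_one _
  map_mul' g g' := by
    funext i
    rw [Pi.mul_apply, ← map_mul]
    rfl

lemma bigPhi_injective {t : ℕ} (m a b : Fin t → ℕ) (h : ∀ i, 2 * a i + 3 * b i = m i) :
    Function.Injective (bigPhi m a b h) := by
  rw [injective_iff_map_eq_one]
  intro g hg
  have hcomp : ∀ i, (Multiplicative.ofAdd
      ((fun s => g.toAdd.1 ⟨i, s⟩ : Fin (a i) → ZMod 2),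
       (fun s => g.toAdd.2 ⟨i, s⟩ : Fin (b i) → ZMod 3))) = 1 := by
    intro i
    apply psiHom_injective (a i) (b i) (m i) (h i)
    rw [map_one]
    have hgi : (bigPhi m a b h) g i = (1 : ∀ i, Equiv.Perm (Fin (m i))) i := by rw [hg]
    exact hgi
  have h1 : g.toAdd.1 = 0 := by
    funext s
    obtain ⟨i, si⟩ := s
    have := congrArg (fun z => (Multiplicative.toAdd z).1 si) (hcomp i)
    simpa using this
  have h2 : g.toAdd.2 = 0 := by
    funext s
    obtain ⟨i, si⟩ := s
    have := congrArg (fun z => (Multiplicative.toAdd z).2 si) (hcomp i)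
    simpa using this
  have : g.toAdd = 0 := by ext1 <;> [exact h1; exact h2]
  simpa [← toAdd_one] using congrArg Multiplicative.ofAdd this

/-- If `S_{m_1} × ⋯ × S_{m_t}` embeds into `S_n` and all `m_i > 1`,
then `m_1 + ⋯ + m_t ≤ n`. -/
theorem stmt13 (t n : ℕ) (ht : 1 ≤ t) (hn : 1 ≤ n) (m : Fin t → ℕ) (hm : ∀ i, 1 < m i)
    (f : (∀ i, Equiv.Perm (Fin (m i))) →* Equiv.Perm (Fin n))
    (hf : Function.Injective f) :
    ∑ i, m i ≤ n := by
  classical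
  let a : Fin t → ℕ := fun i => if m i % 2 = 0 then m i / 2 else (m i - 3) / 2
  let b : Fin t → ℕ := fun i => m i % 2
  have hab : ∀ i, 2 * a i + 3 * b i = m i := by
    intro i
    have := hm i
    simp only [a, b]
    split <;> omega
  have hcore := core (Σ i, Fin (a i)) (Σ i, Fin (b i)) n
    (f.comp (bigPhi m a b hab)) (hf.comp (bigPhi_injective m a b hab))
  rw [Fintype.card_sigma, Fintype.card_sigma] at hcore
  simp only [Fintype.card_fin] at hcore
  have hsum : ∑ i, m i = 2 * ∑ i, a i + 3 * ∑ i, b i := by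
    rw [Finset.mul_sum, Finset.mul_sum, ← Finset.sum_add_distrib]
    exact Finset.sum_congr rfl fun i _ => (hab i).symm
  rw [hsum]
  exact hcore
end
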